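/- Assume hypothesis (f1), fix λ > 0, w ∈ D ∩ BV(ℝ), and let u ∈ BV(ℝ) be a pointwise limit of a subsequence J_λ^{ε_{ν_j}} w (ε_{ν_j} → 0⁺), so that u solves u + λ f(x,u)_x = w and satisfies the entropy inequality for all smooth convex entropies. If u is discontinuous at a point x₀, with one-sided limits u⁻ = u(x₀−) and u⁺ = u(x₀+), then f(x₀−, u⁻) = f(x₀+, u⁺) =: f̄, and the following entropy conditions hold: (1) if u⁻ < u⁺ and x₀ ≠ 0, then f(x₀,k) ≥ f̄ for all k ∈ [u⁻, u⁺]; (2) if u⁻ > u⁺ and x₀ ≠ 0, then f(x₀,k) ≤ f̄ for all k ∈ [u⁺, u⁻]; (3) if u⁻ < u⁺ and x₀ = 0, then there exists u* ∈ [u⁻, u⁺] such that f_l(k) ≥ f̄ for all k ∈ [u⁻, u*] and f_r(k) ≥ f̄ for all k ∈ [u*, u⁺]; (4) if u⁻ > u⁺ and x₀ = 0, then there exists u* ∈ [u⁺, u⁻] such that f_r(k) ≤ f̄ for all k ∈ [u⁺, u*] and f_l(k) ≤ f̄ for all k ∈ [u*, u⁻]. -/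

import Mathlib

open MeasureTheory Real Set Filter Topology

/-- Hypothesis (f0) on the flux `f`. -/
structure HypF0 (f : ℝ → ℝ → ℝ) : Prop where
  meas : ∀ ω : ℝ, Measurable fun x => f x ω
  bdd : ∀ ω : ℝ, ∃ C : ℝ, ∀ x, |f x ω| ≤ C
  smooth : ∀ x : ℝ, ContDiff ℝ (⊤ : ℕ∞) (f x)
  lip : ∃ L ≥ (0:ℝ), ∀ x ω₁ ω₂, |f x ω₁ - f x ω₂| ≤ L * |ω₁ - ω₂|
  int0 : ∃ L₁ ≥ (0:ℝ), Integrable (fun x => f x 0) ∧ (∫ x, |f x 0|) ≤ L₁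

/-- `u` is a weak solution of the resolvent equation `u + λ[f(x,u) − ε u_x]_x = w`. -/
def IsWeakSolRes (f : ℝ → ℝ → ℝ) (lam eps : ℝ) (w u : ℝ → ℝ) : Prop :=
  ∀ φ : ℝ → ℝ, ContDiff ℝ 2 φ → HasCompactSupport φ →
    (∫ x, ((u x - w x) / lam * φ x - f x (u x) * deriv φ x
        - eps * u x * deriv (deriv φ) x)) = 0

/-- Hypothesis (f1): `f` satisfies (f0) and is of the piecewise form
`f(x,ω) = f_l(ω)` for `x ≤ 0`, `f(x,ω) = f_r(ω)` for `x > 0`, with `f_l, f_r`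
smooth, `f_l(0) = f_r(0) = 0` and `f_l(1) = f_r(1)`. -/
structure HypF1 (f : ℝ → ℝ → ℝ) (fl fr : ℝ → ℝ) : Prop where
  hf0 : HypF0 f
  piecewise : ∀ x ω : ℝ, f x ω = if x ≤ 0 then fl ω else fr ω
  smooth_l : ContDiff ℝ (⊤ : ℕ∞) fl
  smooth_r : ContDiff ℝ (⊤ : ℕ∞) fr
  zero_l : fl 0 = 0
  zero_r : fr 0 = 0
  one_eq : fl 1 = fr 1

/-- `u` is a weak solution of the (non viscous) resolvent equation
`u + λ f(x,u)_x = w`. -/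
def IsWeakSolResNV (f : ℝ → ℝ → ℝ) (lam : ℝ) (w u : ℝ → ℝ) : Prop :=
  ∀ φ : ℝ → ℝ, ContDiff ℝ 1 φ → HasCompactSupport φ →
    (∫ x, ((u x - w x) / lam * φ x - f x (u x) * deriv φ x)) = 0

/-- The entropy inequality (4.7) for the entropy `η`, in duality with nonnegative
test functions:
`λ δ₀ ∫₀^{u(0)} η''(ω)[f_r(ω) − f_l(ω)] dω + λ q(x,u)_x + η'(u)[u − w] ≤ 0`,
where `q(x,ω) = ∫₀^ω η'(s) ∂_s f(x,s) ds`. -/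
def EntropyIneq (fl fr : ℝ → ℝ) (lam : ℝ) (w u : ℝ → ℝ) (η : ℝ → ℝ) : Prop :=
  ∀ φ : ℝ → ℝ, ContDiff ℝ 1 φ → HasCompactSupport φ → (∀ x, 0 ≤ φ x) →
    lam * φ 0 * (∫ ω in (0:ℝ)..(u 0), deriv (deriv η) ω * (fr ω - fl ω))
      - lam * (∫ x, (if x ≤ 0 then ∫ s in (0:ℝ)..(u x), deriv η s * deriv fl s
                     else ∫ s in (0:ℝ)..(u x), deriv η s * deriv fr s) * deriv φ x)
      + (∫ x, deriv η (u x) * (u x - w x) * φ x) ≤ 0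

noncomputable def psq (t : ℝ) : ℝ := (max t 0)^2

lemma psq_hasDerivAt (t : ℝ) : HasDerivAt psq (2 * max t 0) t := by
  rcases lt_trichotomy t 0 with h|h|h
  · have he : psq =ᶠ[𝓝 t] (fun _ => (0:ℝ)) := by
      filter_upwards [Iio_mem_nhds h] with s hs
      have hs' : s ≤ 0 := le_of_lt (mem_Iio.mp hs)
      simp only [psq, max_eq_right hs', ne_eq]
      norm_num
    have := (hasDerivAt_const t (0:ℝ)).congr_of_eventuallyEq he
    simpa [max_eq_right h.le] using this
  · subst h
    rw [hasDerivAt_iff_isLittleO]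
    rw [Asymptotics.isLittleO_iff]
    intro c hc
    filter_upwards [Metric.ball_mem_nhds (0:ℝ) hc] with s hs
    have h1 : |max s 0| ≤ |s| := by
      rcases le_total s 0 with h'|h'
      · simp [max_eq_right h']
      · simp [max_eq_left h', abs_of_nonneg h']
    have h2 : |s| < c := by simpa [Real.dist_eq] using hs
    have : ‖psq s - psq 0 - (s - 0) • (2 * max (0:ℝ) 0)‖ = |max s 0|^2 := by
      simp [psq, smul_eq_mul, abs_pow]
    rw [this]
    calc |max s 0|^2 ≤ |s| * |s| := by rw [sq]; exact mul_le_mul h1 h1 (abs_nonneg _) (abs_nonneg _)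
    _ ≤ c * |s| := by
        apply mul_le_mul_of_nonneg_right h2.le (abs_nonneg _)
    _ = c * ‖s - 0‖ := by simp
  · have he : psq =ᶠ[𝓝 t] (fun s => s^2) := by
      filter_upwards [Ioi_mem_nhds h] with s hs
      simp [psq, max_eq_left (le_of_lt (mem_Ioi.mp hs))]
    have := (hasDerivAt_pow 2 t).congr_of_eventuallyEq he
    simpa [max_eq_left h.le, mul_comm] using this

lemma psq_deriv : deriv psq = fun t => 2 * max t 0 := funext fun t => (psq_hasDerivAt t).deriv

lemma psq_contDiff : ContDiff ℝ 1 psq := by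
  rw [contDiff_one_iff_deriv]
  refine ⟨fun t => (psq_hasDerivAt t).differentiableAt, ?_⟩
  rw [psq_deriv]
  exact continuous_const.mul (continuous_id.max continuous_const)

lemma psq_nonneg (t : ℝ) : 0 ≤ psq t := sq_nonneg _

lemma psq_le_one {t : ℝ} (h : t ≤ 1) : psq t ≤ 1 := by
  have h0 : 0 ≤ max t 0 := le_max_right _ _
  have h1 : max t 0 ≤ 1 := max_le h zero_le_one
  calc psq t = (max t 0)^2 := rfl
  _ ≤ 1^2 := by apply pow_le_pow_left₀ h0 h1
  _ = 1 := one_pow _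

lemma psq_of_nonpos {t : ℝ} (h : t ≤ 0) : psq t = 0 := by
  simp [psq, max_eq_right h]

lemma psq_one : psq 1 = 1 := by norm_num [psq]

/-- The C¹ bump test function centered at `x₀` with radius `r`. -/
noncomputable def tb (x₀ r x : ℝ) : ℝ := psq (1 - ((x - x₀)/r)^2)

/-- The derivative of the bump. -/
noncomputable def tbD (x₀ r x : ℝ) : ℝ :=
  2 * max (1 - ((x - x₀)/r)^2) 0 * -(2*(x - x₀)/r^2)

lemma tb_hasDerivAt (x₀ r x : ℝ) : HasDerivAt (tb x₀ r) (tbD x₀ r x) x := by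
  have h1 : HasDerivAt (fun y => 1 - ((y - x₀)/r)^2) (-(2*(x - x₀)/r^2)) x := by
    have h := ((((hasDerivAt_id x).sub_const x₀).div_const r).fun_pow 2).const_sub 1
    refine h.congr_deriv ?_
    push_cast
    simp only [id_eq]
    ring
  have h2 := (psq_hasDerivAt (1 - ((x - x₀)/r)^2)).comp x h1
  exact h2

lemma tb_deriv (x₀ r : ℝ) : deriv (tb x₀ r) = tbD x₀ r :=
  funext fun x => (tb_hasDerivAt x₀ r x).deriv

lemma tb_contDiff (x₀ r : ℝ) : ContDiff ℝ 1 (tb x₀ r) := by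
  have hinner : ContDiff ℝ 1 (fun y : ℝ => 1 - ((y - x₀)/r)^2) := by
    apply contDiff_const.sub
    exact (((contDiff_id.sub contDiff_const).div_const r).pow 2)
  exact psq_contDiff.comp hinner

lemma tb_nonneg (x₀ r x : ℝ) : 0 ≤ tb x₀ r x := psq_nonneg _

lemma tb_le_one (x₀ r x : ℝ) : tb x₀ r x ≤ 1 := by
  apply psq_le_one
  nlinarith [sq_nonneg ((x - x₀)/r)]

lemma tb_self (x₀ r : ℝ) : tb x₀ r x₀ = 1 := by
  simp [tb, psq_one]

lemma sq_arg_ge {x₀ r x : ℝ} (hr : 0 < r) (h : r ≤ |x - x₀|) :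
    1 - ((x - x₀)/r)^2 ≤ 0 := by
  have h1 : r^2 ≤ (x - x₀)^2 := by
    calc r^2 ≤ |x - x₀|^2 := by apply pow_le_pow_left₀ hr.le h
    _ = (x - x₀)^2 := sq_abs _
  have h2 : (1:ℝ) ≤ (x - x₀)^2 / r^2 := (one_le_div (by positivity)).2 h1
  have h3 : ((x - x₀)/r)^2 = (x - x₀)^2 / r^2 := by rw [div_pow]
  linarith [h3 ▸ h2]

lemma tb_zero {x₀ r x : ℝ} (hr : 0 < r) (h : r ≤ |x - x₀|) : tb x₀ r x = 0 :=
  psq_of_nonpos (sq_arg_ge hr h)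

lemma tbD_zero {x₀ r x : ℝ} (hr : 0 < r) (h : r ≤ |x - x₀|) : tbD x₀ r x = 0 := by
  simp [tbD, max_eq_right (sq_arg_ge hr h)]

lemma tbD_cont (x₀ r : ℝ) : Continuous (tbD x₀ r) := by
  apply Continuous.mul
  · apply continuous_const.mul
    exact (continuous_const.sub (((continuous_id.sub continuous_const).div_const r).pow 2)).max
      continuous_const
  · exact ((continuous_const.mul (continuous_id.sub continuous_const)).div_const _).neg

lemma tbD_nonneg {x₀ r x : ℝ} (hx : x ≤ x₀) : 0 ≤ tbD x₀ r x := by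
  apply mul_nonneg
  · positivity
  · rw [neg_nonneg]
    apply div_nonpos_of_nonpos_of_nonneg
    · linarith
    · positivity

lemma tbD_nonpos {x₀ r x : ℝ} (hx : x₀ ≤ x) : tbD x₀ r x ≤ 0 := by
  apply mul_nonpos_of_nonneg_of_nonpos
  · positivity
  · rw [neg_nonpos]
    apply div_nonneg (by linarith) (by positivity)

lemma tb_compactSupport {x₀ r : ℝ} (hr : 0 < r) : HasCompactSupport (tb x₀ r) := by
  apply HasCompactSupport.intro (isCompact_Icc (a := x₀ - r) (b := x₀ + r))
  intro x hx
  apply tb_zero hr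
  simp only [mem_Icc, not_and_or, not_le] at hx
  rcases hx with h|h
  · rw [abs_sub_comm, abs_of_pos (by linarith)]; linarith
  · rw [abs_of_pos (by linarith)]; linarith

lemma tb_left (x₀ r : ℝ) (hr : 0 < r) : tb x₀ r (x₀ - r) = 0 := by
  apply tb_zero hr; rw [abs_of_nonpos (by linarith)]; linarith

lemma tb_right (x₀ r : ℝ) (hr : 0 < r) : tb x₀ r (x₀ + r) = 0 := by
  apply tb_zero hr; rw [abs_of_nonneg (by linarith)]; linarith

lemma tbD_integral_left {x₀ r : ℝ} (hr : 0 < r) :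
    ∫ x in (x₀ - r)..x₀, tbD x₀ r x = 1 := by
  have := intervalIntegral.integral_deriv_eq_sub
    (f := tb x₀ r) (a := x₀ - r) (b := x₀)
    (fun x _ => (tb_hasDerivAt x₀ r x).differentiableAt)
    (by rw [tb_deriv]; exact (tbD_cont x₀ r).intervalIntegrable _ _)
  rw [tb_deriv] at this
  rw [this, tb_self, tb_left x₀ r hr]
  norm_num

lemma tbD_integral_right {x₀ r : ℝ} (hr : 0 < r) :
    ∫ x in x₀..(x₀ + r), tbD x₀ r x = -1 := by
  have := intervalIntegral.integral_deriv_eq_sub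
    (f := tb x₀ r) (a := x₀) (b := x₀ + r)
    (fun x _ => (tb_hasDerivAt x₀ r x).differentiableAt)
    (by rw [tb_deriv]; exact (tbD_cont x₀ r).intervalIntegrable _ _)
  rw [tb_deriv] at this
  rw [this, tb_self, tb_right x₀ r hr]
  norm_num

-- helpers: bounds, integrability, primitives, extraction
open MeasureTheory Real Set Filter Topology

lemma cont_bound_unit {G : ℝ → ℝ} (hG : Continuous G) :
    ∃ C, 0 ≤ C ∧ ∀ v ∈ Icc (0:ℝ) 1, |G v| ≤ C := by
  obtain ⟨z, hz, hmax⟩ := isCompact_Icc.exists_isMaxOn (Set.nonempty_Icc.2 zero_le_one)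
    (hG.abs.continuousOn (s := Icc (0:ℝ) 1))
  exact ⟨|G z|, abs_nonneg _, fun v hv => hmax hv⟩

lemma integrableOn_of_bdd {g : ℝ → ℝ} (hg : AEStronglyMeasurable g volume) {C : ℝ}
    (hC : ∀ x, |g x| ≤ C) {s : Set ℝ} (hs : MeasurableSet s) (hμ : volume s < ⊤) :
    IntegrableOn g s := by
  have : IsFiniteMeasure (volume.restrict s) :=
    ⟨by rwa [Measure.restrict_apply_univ]⟩
  exact Integrable.mono' (integrable_const C) hg.restrict
    (Filter.Eventually.of_forall fun x => by simpa using hC x)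

lemma integrable_of_bdd_support {g : ℝ → ℝ} (hg : AEStronglyMeasurable g volume) {C a b : ℝ}
    (hC : ∀ x, |g x| ≤ C) (hsupp : ∀ x ∉ Icc a b, g x = 0) : Integrable g := by
  have hind : g = Set.indicator (Icc a b) g := by
    funext x
    by_cases h : x ∈ Icc a b
    · rw [Set.indicator_of_mem h]
    · rw [Set.indicator_of_notMem h, hsupp x h]
  rw [hind, integrable_indicator_iff measurableSet_Icc]
  exact integrableOn_of_bdd hg hC measurableSet_Icc
    (by rw [Real.volume_Icc]; exact ENNReal.ofReal_lt_top)

lemma aesm_pcw {gl gr u : ℝ → ℝ} (hgl : Continuous gl) (hgr : Continuous gr)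
    (hu : AEStronglyMeasurable u volume) :
    AEStronglyMeasurable (fun x => if x ≤ 0 then gl (u x) else gr (u x)) volume := by
  have h1 : (fun x => if x ≤ 0 then gl (u x) else gr (u x))
      = fun x => Set.indicator (Iic (0:ℝ)) (fun y => gl (u y)) x
          + Set.indicator (Ioi (0:ℝ)) (fun y => gr (u y)) x := by
    funext x
    by_cases h : x ≤ 0
    · rw [if_pos h, Set.indicator_of_mem (mem_Iic.2 h),
        Set.indicator_of_notMem (by simpa using h)]
      ring
    · rw [if_neg h, Set.indicator_of_notMem (by simpa using h),
        Set.indicator_of_mem (mem_Ioi.2 (not_le.mp h))]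
      ring
  rw [h1]
  exact ((hgl.comp_aestronglyMeasurable hu).indicator measurableSet_Iic).add
    ((hgr.comp_aestronglyMeasurable hu).indicator measurableSet_Ioi)

lemma exists_small_interval {g : ℝ → ℝ} (x₀ : ℝ)
    (hg : IntegrableOn g (Icc (x₀ - 1) (x₀ + 1))) {ε : ℝ} (hε : 0 < ε) :
    ∃ δ, 0 < δ ∧ δ ≤ 1 ∧ ∫ x in Icc (x₀ - δ) (x₀ + δ), g x ≤ ε := by
  have hanti : Antitone (fun n : ℕ => Icc (x₀ - 1/(n+1)) (x₀ + 1/(n+1))) := by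
    intro m n hmn
    apply Set.Icc_subset_Icc <;>
    · have h1 : (1:ℝ)/(n+1) ≤ 1/(m+1) := by
        apply div_le_div_of_nonneg_left one_pos.le (by positivity)
        exact_mod_cast by omega
      linarith
  have hint : ⋂ n : ℕ, Icc (x₀ - 1/(n+1)) (x₀ + 1/(n+1)) = {x₀} := by
    apply Set.eq_singleton_iff_unique_mem.2
    constructor
    · simp only [Set.mem_iInter, mem_Icc]
      intro n
      constructor <;> [linarith [show (0:ℝ) < 1/(n+1) by positivity];
        linarith [show (0:ℝ) < 1/(n+1) by positivity]]
    · intro y hy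
      simp only [Set.mem_iInter, mem_Icc] at hy
      by_contra hne
      obtain ⟨n, hn⟩ := exists_nat_gt (1/|y - x₀|)
      have habs : 0 < |y - x₀| := abs_pos.2 (sub_ne_zero.2 hne)
      have h2 : 1/(n+1 : ℝ) < |y - x₀| := by
        rw [div_lt_iff₀ (by positivity)]
        rw [div_lt_iff₀ habs] at hn
        nlinarith [habs]
      obtain ⟨h3, h4⟩ := hy n
      have : |y - x₀| ≤ 1/(n+1:ℝ) := abs_le.2 ⟨by linarith, by linarith⟩
      linarith
  have htend := tendsto_setIntegral_of_antitone (f := g) (μ := volume)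
    (fun n : ℕ => measurableSet_Icc) hanti ⟨0, by norm_num; exact hg⟩
  rw [hint] at htend
  have hzero : ∫ x in ({x₀} : Set ℝ), g x = 0 := by
    exact setIntegral_measure_zero _ (measure_singleton x₀)
  rw [hzero] at htend
  have := htend.eventually (eventually_le_nhds hε)
  obtain ⟨n, hn⟩ := this.exists
  refine ⟨1/(n+1), by positivity, ?_, hn⟩
  rw [div_le_one (by positivity)]
  linarith [Nat.cast_nonneg (α := ℝ) n]

lemma nonneg_on_Icc {g : ℝ → ℝ} (hg : Continuous g) {a b : ℝ} (hab : a < b)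
    (h : ∀ k ∈ Ioo a b, 0 ≤ g k) : ∀ k ∈ Icc a b, 0 ≤ g k := by
  intro k hk
  have hkc : k ∈ closure (Ioo a b) := by rw [closure_Ioo hab.ne]; exact hk
  have hne : (𝓝[Ioo a b] k).NeBot := mem_closure_iff_nhdsWithin_neBot.1 hkc
  have htd : Tendsto g (𝓝[Ioo a b] k) (𝓝 (g k)) :=
    (hg.continuousAt).continuousWithinAt.tendsto
  exact ge_of_tendsto htd (eventually_mem_nhdsWithin.mono h)

/-- FTC primitive has derivative equal to integrand, for continuous integrand. -/
lemma primitive_hasDerivAt {q : ℝ → ℝ} (hq : Continuous q) (v : ℝ) :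
    HasDerivAt (fun t => ∫ s in (0:ℝ)..t, q s) (q v) v :=
  intervalIntegral.integral_hasDerivAt_right (hq.intervalIntegrable _ _)
    (hq.stronglyMeasurableAtFilter _ _) hq.continuousAt

lemma primitive_continuous {q : ℝ → ℝ} (hq : Continuous q) :
    Continuous (fun t => ∫ s in (0:ℝ)..t, q s) :=
  continuous_iff_continuousAt.2 fun v => (primitive_hasDerivAt hq v).continuousAt

lemma primitive_deriv {q : ℝ → ℝ} (hq : Continuous q) :
    deriv (fun t => ∫ s in (0:ℝ)..t, q s) = q :=
  funext fun v => (primitive_hasDerivAt hq v).deriv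

lemma primitive_contDiff {q : ℝ → ℝ} (hq : ContDiff ℝ (⊤:ℕ∞) q) :
    ContDiff ℝ (⊤:ℕ∞) (fun t => ∫ s in (0:ℝ)..t, q s) := by
  have : ContDiff ℝ ((⊤:ℕ∞):WithTop ℕ∞) (fun t => ∫ s in (0:ℝ)..t, q s) := by
    rw [contDiff_infty_iff_deriv]
    refine ⟨fun v => (primitive_hasDerivAt hq.continuous v).differentiableAt, ?_⟩
    rw [primitive_deriv hq.continuous]
    exact hq
  exact this

/-- Integration by parts against a primitive. -/
lemma ibp_primitive {ρ gg : ℝ → ℝ} (hρ : Continuous ρ) (hgg : ContDiff ℝ (⊤:ℕ∞) gg) (a b : ℝ) :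
    ∫ s in a..b, (∫ t in (0:ℝ)..s, ρ t) * deriv gg s
      = (∫ t in (0:ℝ)..b, ρ t) * gg b - (∫ t in (0:ℝ)..a, ρ t) * gg a
        - ∫ s in a..b, ρ s * gg s := by
  exact intervalIntegral.integral_mul_deriv_eq_deriv_mul
    (fun x _ => primitive_hasDerivAt hρ x)
    (fun x _ => ((hgg.differentiable (by simp)) x).hasDerivAt)
    (hρ.intervalIntegrable _ _)
    ((hgg.continuous_deriv (by exact_mod_cast le_top)).intervalIntegrable _ _)

/-- Extraction of pointwise nonnegativity from nonnegativity against bumps. -/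
lemma extraction {g : ℝ → ℝ} (hg : Continuous g) {a b a' b' k : ℝ}
    (haa : a ≤ a') (hbb : b' ≤ b) (hak : a' < k) (hkb : k < b')
    (H : ∀ ρ : ℝ → ℝ, ContDiff ℝ (⊤:ℕ∞) ρ → (∀ t, 0 ≤ ρ t) → tsupport ρ ⊆ Ioo a' b' →
      0 ≤ ∫ s in a..b, ρ s * g s) : 0 ≤ g k := by
  by_contra hneg
  push_neg at hneg
  set m := g k with hm
  obtain ⟨δ₁, hδ₁, hδ₁'⟩ : ∃ δ₁ > 0, ∀ x, |x - k| < δ₁ → |g x - m| < -m/2 := by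
    have := Metric.continuousAt_iff.1 (hg.continuousAt (x := k)) (-m/2) (by linarith)
    obtain ⟨δ, hδ, h⟩ := this
    exact ⟨δ, hδ, fun x hx => by simpa [Real.dist_eq] using h (by simpa [Real.dist_eq] using hx)⟩
  set δ := min (δ₁/2) (min ((k - a')/2) ((b' - k)/2)) with hδdef
  have hδpos : 0 < δ := by
    apply lt_min (by linarith) (lt_min (by linarith) (by linarith))
  have hδlt : δ < δ₁ := lt_of_le_of_lt (min_le_left _ _) (by linarith)
  have hIccsub : Icc (k - δ) (k + δ) ⊆ Ioo a' b' := by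
    intro x hx
    have h1 : δ ≤ (k - a')/2 := le_trans (min_le_right _ _) (min_le_left _ _)
    have h2 : δ ≤ (b' - k)/2 := le_trans (min_le_right _ _) (min_le_right _ _)
    exact ⟨by cases hx with | intro h3 h4 => linarith,
      by cases hx with | intro h3 h4 => linarith⟩
  have hglt : ∀ x ∈ Icc (k - δ) (k + δ), g x ≤ m/2 := by
    intro x hx
    have : |x - k| < δ₁ := by
      rw [abs_lt]
      cases hx with | intro h3 h4 => constructor <;> linarith
    have := hδ₁' x this
    rw [abs_lt] at this
    linarith [this.2]
  -- the bump
  set B : ContDiffBump k := ⟨δ/2, δ, by linarith, by linarith⟩ with hB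
  have hBs : ContDiff ℝ (⊤:ℕ∞) (fun x => B x) := B.contDiff
  have hBnn : ∀ t, 0 ≤ B t := fun t => B.nonneg
  have hBsupp : tsupport (fun x => B x) ⊆ Ioo a' b' := by
    rw [show (fun x => B x) = ⇑B from rfl, B.tsupport_eq]
    rw [Real.closedBall_eq_Icc]
    exact hIccsub
  have hI := H (fun x => B x) hBs hBnn hBsupp
  -- now show the integral is negative
  have hcont : Continuous (fun s => B s * g s) := B.continuous.mul hg
  have hab1 : a ≤ k - δ := by
    have h1 : δ ≤ (k - a')/2 := le_trans (min_le_right _ _) (min_le_left _ _)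
    linarith
  have hab2 : k + δ ≤ b := by
    have h2 : δ ≤ (b' - k)/2 := le_trans (min_le_right _ _) (min_le_right _ _)
    linarith
  have hzero1 : ∫ s in a..(k - δ), B s * g s = 0 := by
    rw [intervalIntegral.integral_congr (g := fun _ => (0:ℝ))]
    · simp
    · intro x hx
      rw [Set.uIcc_of_le (by linarith)] at hx
      have : B x = 0 := B.zero_of_le_dist (by
        rw [Real.dist_eq, abs_sub_comm]
        rw [abs_of_nonneg (by cases hx with | intro h3 h4 => linarith)]
        cases hx with | intro h3 h4 => linarith)
      simp [this]
  have hzero2 : ∫ s in (k + δ)..b, B s * g s = 0 := by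
    rw [intervalIntegral.integral_congr (g := fun _ => (0:ℝ))]
    · simp
    · intro x hx
      rw [Set.uIcc_of_le (by linarith)] at hx
      have : B x = 0 := B.zero_of_le_dist (by
        rw [Real.dist_eq]
        rw [abs_of_nonneg (by cases hx with | intro h3 h4 => linarith)]
        cases hx with | intro h3 h4 => linarith)
      simp [this]
  have hsplit : ∫ s in a..b, B s * g s
      = (∫ s in a..(k-δ), B s * g s) + (∫ s in (k-δ)..(k+δ), B s * g s)
        + (∫ s in (k+δ)..b, B s * g s) := by
    rw [intervalIntegral.integral_add_adjacent_intervals (hcont.intervalIntegrable _ _)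
      (hcont.intervalIntegrable _ _),
      intervalIntegral.integral_add_adjacent_intervals (hcont.intervalIntegrable _ _)
      (hcont.intervalIntegrable _ _)]
  -- middle bound
  have hmid : ∫ s in (k-δ)..(k+δ), B s * g s ≤ (m/2) * δ := by
    have hmono : ∫ s in (k-δ)..(k+δ), B s * g s ≤ ∫ s in (k-δ)..(k+δ), B s * (m/2) := by
      apply intervalIntegral.integral_mono_on (by linarith)
        (hcont.intervalIntegrable _ _)
        ((B.continuous.mul continuous_const).intervalIntegrable _ _)
      intro x hx
      exact mul_le_mul_of_nonneg_left (hglt x hx) (B.nonneg)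
    have hBint : δ ≤ ∫ s in (k-δ)..(k+δ), B s := by
      have hs1 : (0:ℝ) ≤ ∫ s in (k-δ)..(k-δ/2), B s :=
        intervalIntegral.integral_nonneg (by linarith) (fun x _ => B.nonneg)
      have hs3 : (0:ℝ) ≤ ∫ s in (k+δ/2)..(k+δ), B s :=
        intervalIntegral.integral_nonneg (by linarith) (fun x _ => B.nonneg)
      have hs2 : ∫ s in (k-δ/2)..(k+δ/2), B s = δ := by
        rw [intervalIntegral.integral_congr (g := fun _ => (1:ℝ))]
        · rw [intervalIntegral.integral_const]
          simp only [smul_eq_mul, mul_one]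
          ring
        · intro x hx
          rw [Set.uIcc_of_le (by linarith)] at hx
          apply B.one_of_mem_closedBall
          rw [Real.closedBall_eq_Icc]
          cases hx with | intro h3 h4 =>
          exact mem_Icc.2 ⟨show k - δ/2 ≤ x by linarith, show x ≤ k + δ/2 by linarith⟩
      have hsplit2 : ∫ s in (k-δ)..(k+δ), B s
          = (∫ s in (k-δ)..(k-δ/2), B s) + (∫ s in (k-δ/2)..(k+δ/2), B s)
            + (∫ s in (k+δ/2)..(k+δ), B s) := by
        rw [intervalIntegral.integral_add_adjacent_intervals
          (B.continuous.intervalIntegrable _ _) (B.continuous.intervalIntegrable _ _),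
          intervalIntegral.integral_add_adjacent_intervals
          (B.continuous.intervalIntegrable _ _) (B.continuous.intervalIntegrable _ _)]
      rw [hsplit2, hs2]; linarith
    calc ∫ s in (k-δ)..(k+δ), B s * g s ≤ ∫ s in (k-δ)..(k+δ), B s * (m/2) := hmono
    _ = (∫ s in (k-δ)..(k+δ), B s) * (m/2) := by rw [intervalIntegral.integral_mul_const]
    _ ≤ δ * (m/2) := by
        apply mul_le_mul_of_nonpos_right hBint (by linarith)
    _ = (m/2) * δ := by ring
  rw [hsplit, hzero1, hzero2] at hI
  nlinarith [hI, hmid, hδpos, hneg]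

/-- Master localization lemma: passing to the traces at `x₀` in a distributional
inequality tested against concentrating bumps. -/
lemma master {lam A x₀ um up : ℝ} (hlam : 0 < lam)
    {u w : ℝ → ℝ} (hu : AEStronglyMeasurable u volume)
    (hu01 : ∀ x, u x ∈ Icc (0:ℝ) 1) (hw : Integrable w)
    {Gl Gr P : ℝ → ℝ} (hGl : Continuous Gl) (hGr : Continuous Gr) (hP : Continuous P)
    (hum : Tendsto u (𝓝[<] x₀) (𝓝 um)) (hup : Tendsto u (𝓝[>] x₀) (𝓝 up))
    (H : ∀ φ : ℝ → ℝ, ContDiff ℝ 1 φ → HasCompactSupport φ → (∀ x, 0 ≤ φ x) →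
      lam * φ 0 * A
        - lam * (∫ x, (if x ≤ 0 then Gl (u x) else Gr (u x)) * deriv φ x)
        + (∫ x, P (u x) * (u x - w x) * φ x) ≤ 0) :
    lam * (if x₀ = 0 then A else 0)
      - lam * ((if x₀ ≤ 0 then Gl um else Gr um) - (if x₀ < 0 then Gl up else Gr up)) ≤ 0 := by
  set Q : ℝ → ℝ := fun x => if x ≤ 0 then Gl (u x) else Gr (u x) with hQdef
  set Qm : ℝ := if x₀ ≤ 0 then Gl um else Gr um with hQm
  set Qp : ℝ := if x₀ < 0 then Gl up else Gr up with hQp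
  set X : ℝ := lam * (if x₀ = 0 then A else 0) - lam * (Qm - Qp) with hX
  -- it suffices to bound X by (2 lam + 1) ε for all positive ε
  suffices hsuf : ∀ ε, 0 < ε → X ≤ (2*lam + 1) * ε by
    by_contra hcon
    push_neg at hcon
    have hc : 0 < 2*lam + 1 := by linarith
    have h1 := hsuf (X / (2*(2*lam+1))) (by positivity)
    have h2 : (2*lam+1) * (X / (2*(2*lam+1))) = X/2 := by field_simp
    rw [h2] at h1
    linarith
  intro ε hε
  -- measurability and bounds
  have hQaesm : AEStronglyMeasurable Q volume := aesm_pcw hGl hGr hu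
  obtain ⟨CP, hCP0, hCPb⟩ := cont_bound_unit hP
  -- left trace
  obtain ⟨δ₁, hδ₁, hδ₁'⟩ : ∃ δ, 0 < δ ∧ ∀ x, x₀ - δ < x → x < x₀ → |Q x - Qm| ≤ ε := by
    rcases le_or_gt x₀ 0 with hx₀ | hx₀
    · have ht : Tendsto (fun x => Gl (u x)) (𝓝[<] x₀) (𝓝 (Gl um)) :=
        (hGl.continuousAt.tendsto).comp hum
      rw [Metric.tendsto_nhdsWithin_nhds] at ht
      obtain ⟨δ, hδ, hd⟩ := ht ε hε
      refine ⟨δ, hδ, fun x h1 h2 => ?_⟩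
      have hxle : x ≤ 0 := le_trans h2.le hx₀
      have := hd (mem_Iio.2 h2) (by rw [Real.dist_eq, abs_of_neg (by linarith)]; linarith)
      rw [Real.dist_eq] at this
      have e1 : Q x = Gl (u x) := by simp [hQdef, hxle]
      have e2 : Qm = Gl um := by simp [hQm, hx₀]
      rw [e1, e2]
      exact this.le
    · have ht : Tendsto (fun x => Gr (u x)) (𝓝[<] x₀) (𝓝 (Gr um)) :=
        (hGr.continuousAt.tendsto).comp hum
      rw [Metric.tendsto_nhdsWithin_nhds] at ht
      obtain ⟨δ, hδ, hd⟩ := ht ε hε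
      refine ⟨min δ x₀, lt_min hδ hx₀, fun x h1 h2 => ?_⟩
      have hxpos : 0 < x := by
        have := min_le_right δ x₀; linarith
      have := hd (mem_Iio.2 h2) (by
        rw [Real.dist_eq, abs_of_neg (by linarith)]
        have := min_le_left δ x₀; linarith)
      rw [Real.dist_eq] at this
      have e1 : Q x = Gr (u x) := by simp [hQdef, not_le.2 hxpos]
      have e2 : Qm = Gr um := by simp [hQm, not_le.2 hx₀]
      rw [e1, e2]
      exact this.le
  -- right trace
  obtain ⟨δ₂, hδ₂, hδ₂'⟩ : ∃ δ, 0 < δ ∧ ∀ x, x₀ < x → x < x₀ + δ → |Q x - Qp| ≤ ε := by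
    rcases lt_or_ge x₀ 0 with hx₀ | hx₀
    · have ht : Tendsto (fun x => Gl (u x)) (𝓝[>] x₀) (𝓝 (Gl up)) :=
        (hGl.continuousAt.tendsto).comp hup
      rw [Metric.tendsto_nhdsWithin_nhds] at ht
      obtain ⟨δ, hδ, hd⟩ := ht ε hε
      refine ⟨min δ (-x₀), lt_min hδ (by linarith), fun x h1 h2 => ?_⟩
      have hxle : x ≤ 0 := by
        have := min_le_right δ (-x₀); linarith
      have := hd (mem_Ioi.2 h1) (by
        rw [Real.dist_eq, abs_of_pos (by linarith)]
        have := min_le_left δ (-x₀); linarith)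
      rw [Real.dist_eq] at this
      have e1 : Q x = Gl (u x) := by simp [hQdef, hxle]
      have e2 : Qp = Gl up := by simp [hQp, hx₀]
      rw [e1, e2]
      exact this.le
    · have ht : Tendsto (fun x => Gr (u x)) (𝓝[>] x₀) (𝓝 (Gr up)) :=
        (hGr.continuousAt.tendsto).comp hup
      rw [Metric.tendsto_nhdsWithin_nhds] at ht
      obtain ⟨δ, hδ, hd⟩ := ht ε hε
      refine ⟨δ, hδ, fun x h1 h2 => ?_⟩
      have hxpos : 0 < x := lt_of_le_of_lt hx₀ h1
      have := hd (mem_Ioi.2 h1) (by rw [Real.dist_eq, abs_of_pos (by linarith)]; linarith)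
      rw [Real.dist_eq] at this
      have e1 : Q x = Gr (u x) := by simp [hQdef, not_le.2 hxpos]
      have e2 : Qp = Gr up := by simp [hQp, not_lt.2 hx₀]
      rw [e1, e2]
      exact this.le
  -- dominating function for the zeroth order term
  set g0 : ℝ → ℝ := fun x => CP * (1 + |w x|) with hg0
  have hg0on : ∀ s : Set ℝ, MeasurableSet s → volume s < ⊤ → IntegrableOn g0 s := by
    intro s hsm hsv
    apply Integrable.const_mul
    exact (integrableOn_const hsv.ne).add hw.abs.integrableOn
  obtain ⟨δ₃, hδ₃, hδ₃le, hδ₃'⟩ := exists_small_interval x₀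
    (hg0on _ measurableSet_Icc (by rw [Real.volume_Icc]; exact ENNReal.ofReal_lt_top)) hε
  -- radius
  set r₀ : ℝ := if x₀ = 0 then 1 else |x₀| with hr₀
  have hr₀pos : 0 < r₀ := by
    rw [hr₀]; split_ifs with h
    · norm_num
    · exact abs_pos.2 h
  set r : ℝ := min (min δ₁ δ₂) (min δ₃ r₀) / 2 with hrdef
  have hr : 0 < r := by
    apply div_pos (lt_min (lt_min hδ₁ hδ₂) (lt_min hδ₃ hr₀pos)) two_pos
  have hrδ₁ : r < δ₁ := by
    have h := min_le_left (min δ₁ δ₂) (min δ₃ r₀)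
    have h2 := min_le_left δ₁ δ₂
    rw [hrdef]; linarith
  have hrδ₂ : r < δ₂ := by
    have h := min_le_left (min δ₁ δ₂) (min δ₃ r₀)
    have h2 := min_le_right δ₁ δ₂
    rw [hrdef]; linarith
  have hrδ₃ : r ≤ δ₃ := by
    have h := min_le_right (min δ₁ δ₂) (min δ₃ r₀)
    have h2 := min_le_left δ₃ r₀
    rw [hrdef]; linarith
  have hrr₀ : r ≤ r₀ / 2 := by
    have h := min_le_right (min δ₁ δ₂) (min δ₃ r₀)
    have h2 := min_le_right δ₃ r₀
    rw [hrdef]; linarith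
  -- the test function
  set φ : ℝ → ℝ := tb x₀ r with hφdef
  have hφ1 : ContDiff ℝ 1 φ := tb_contDiff x₀ r
  have hφc : HasCompactSupport φ := tb_compactSupport hr
  have hφnn : ∀ x, 0 ≤ φ x := tb_nonneg x₀ r
  have hH := H φ hφ1 hφc hφnn
  have hφd : deriv φ = tbD x₀ r := tb_deriv x₀ r
  -- term 1
  have hT1 : lam * φ 0 * A = lam * (if x₀ = 0 then A else 0) := by
    rcases eq_or_ne x₀ 0 with h | h
    · rw [if_pos h, hφdef, ← h, tb_self]
      ring
    · have h2 : 0 < |x₀| := abs_pos.2 h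
      have h3 : r ≤ |x₀| := by
        have e : r₀ = |x₀| := by rw [hr₀, if_neg h]
        rw [e] at hrr₀; linarith
      rw [if_neg h, hφdef, tb_zero hr (by rw [zero_sub, abs_neg]; exact h3)]
      ring
  -- integrability of Q * deriv φ
  have hQd_int : Integrable (fun x => Q x * deriv φ x) := by
    obtain ⟨Cl, hCl0, hClb⟩ := cont_bound_unit hGl
    obtain ⟨Cr, hCr0, hCrb⟩ := cont_bound_unit hGr
    apply Integrable.bdd_mul (c := max Cl Cr)
    · exact ((hφ1.continuous_deriv le_rfl).integrable_of_hasCompactSupport hφc.deriv)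
    · exact hQaesm
    · refine Filter.Eventually.of_forall (fun x => ?_)
      rw [hQdef]
      simp only [Real.norm_eq_abs]
      split_ifs with h
      · exact le_trans (hClb _ (hu01 x)) (le_max_left _ _)
      · exact le_trans (hCrb _ (hu01 x)) (le_max_right _ _)
  -- localization of the Q-integral
  have hQsupp : Function.support (fun x => Q x * deriv φ x) ⊆ Ioc (x₀ - r) (x₀ + r) := by
    intro x hx
    rw [Function.mem_support] at hx
    by_contra hmem
    simp only [mem_Ioc, not_and_or, not_lt, not_le] at hmem
    have : deriv φ x = 0 := by
      rw [hφd]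
      apply tbD_zero hr
      rcases hmem with h | h
      · rw [abs_sub_comm, abs_of_nonneg (by linarith)]; linarith
      · rw [abs_of_nonneg (by linarith)]; linarith
    rw [this, mul_zero] at hx
    exact hx rfl
  have hQint_eq : (∫ x, Q x * deriv φ x)
      = ∫ x in (x₀ - r)..(x₀ + r), Q x * deriv φ x :=
    (intervalIntegral.integral_eq_integral_of_support_subset hQsupp).symm
  have hQiileft : IntervalIntegrable (fun x => Q x * deriv φ x) volume (x₀ - r) x₀ :=
    hQd_int.intervalIntegrable
  have hQiiright : IntervalIntegrable (fun x => Q x * deriv φ x) volume x₀ (x₀ + r) :=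
    hQd_int.intervalIntegrable
  have hQsplit : (∫ x in (x₀ - r)..(x₀ + r), Q x * deriv φ x)
      = (∫ x in (x₀ - r)..x₀, Q x * deriv φ x) + (∫ x in x₀..(x₀ + r), Q x * deriv φ x) :=
    (intervalIntegral.integral_add_adjacent_intervals hQiileft hQiiright).symm
  -- left estimate
  have hleft : |(∫ x in (x₀ - r)..x₀, Q x * deriv φ x) - Qm| ≤ ε := by
    have hconst : (∫ x in (x₀ - r)..x₀, Qm * deriv φ x) = Qm := by
      rw [intervalIntegral.integral_const_mul]
      rw [hφd, tbD_integral_left hr, mul_one]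
    have hsub : (∫ x in (x₀ - r)..x₀, Q x * deriv φ x) - Qm
        = ∫ x in (x₀ - r)..x₀, (Q x - Qm) * deriv φ x := by
      rw [show (fun x => (Q x - Qm) * deriv φ x)
          = fun x => Q x * deriv φ x - Qm * deriv φ x from funext fun x => by ring]
      rw [intervalIntegral.integral_sub hQiileft
        (((hφ1.continuous_deriv le_rfl).intervalIntegrable _ _).const_mul Qm), hconst]
    rw [hsub]
    have hb : ∀ᵐ t ∂(volume.restrict (Set.uIoc (x₀ - r) x₀)), ‖(Q t - Qm) * deriv φ t‖ ≤ ε * deriv φ t := by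
      rw [Set.uIoc_of_le (by linarith)]
      have hae : ∀ᵐ t : ℝ, t ≠ x₀ := by
        rw [ae_iff]
        have : {t : ℝ | ¬ t ≠ x₀} = {x₀} := by ext t; simp
        rw [this]; exact measure_singleton x₀
      rw [ae_restrict_iff' measurableSet_Ioc]
      filter_upwards [hae] with t ht htI
      have h1 : x₀ - δ₁ < t := by cases htI with | intro h1 h2 => linarith
      have h2 : t < x₀ := lt_of_le_of_ne htI.2 ht
      have h3 := hδ₁' t h1 h2
      have h4 : 0 ≤ deriv φ t := by rw [hφd]; exact tbD_nonneg htI.2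
      rw [Real.norm_eq_abs, abs_mul, abs_of_nonneg h4]
      exact mul_le_mul_of_nonneg_right h3 h4
    have := intervalIntegral.norm_integral_le_abs_of_norm_le hb
      (((hφ1.continuous_deriv le_rfl).intervalIntegrable _ _).const_mul ε)
    rw [Real.norm_eq_abs] at this
    apply le_trans this
    rw [intervalIntegral.integral_const_mul, hφd, tbD_integral_left hr, mul_one,
      abs_of_nonneg hε.le]
  -- right estimate
  have hright : |(∫ x in x₀..(x₀ + r), Q x * deriv φ x) + Qp| ≤ ε := by
    have hconst : (∫ x in x₀..(x₀ + r), Qp * deriv φ x) = -Qp := by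
      rw [intervalIntegral.integral_const_mul]
      rw [hφd, tbD_integral_right hr]
      ring
    have hsub : (∫ x in x₀..(x₀ + r), Q x * deriv φ x) + Qp
        = ∫ x in x₀..(x₀ + r), (Q x - Qp) * deriv φ x := by
      rw [show (fun x => (Q x - Qp) * deriv φ x)
          = fun x => Q x * deriv φ x - Qp * deriv φ x from funext fun x => by ring]
      rw [intervalIntegral.integral_sub hQiiright
        (((hφ1.continuous_deriv le_rfl).intervalIntegrable _ _).const_mul Qp), hconst]
      ring
    rw [hsub]
    have hb : ∀ᵐ t ∂(volume.restrict (Set.uIoc x₀ (x₀ + r))), ‖(Q t - Qp) * deriv φ t‖ ≤ ε * (-deriv φ t) := by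
      rw [Set.uIoc_of_le (by linarith)]
      rw [ae_restrict_iff' measurableSet_Ioc]
      apply Filter.Eventually.of_forall
      intro t htI
      have h1 : x₀ < t := htI.1
      have h2 : t < x₀ + δ₂ := by cases htI with | intro ha hb => linarith
      have h3 := hδ₂' t h1 h2
      have h4 : deriv φ t ≤ 0 := by rw [hφd]; exact tbD_nonpos h1.le
      rw [Real.norm_eq_abs, abs_mul, abs_of_nonpos h4]
      exact mul_le_mul_of_nonneg_right h3 (by linarith)
    have := intervalIntegral.norm_integral_le_abs_of_norm_le hb
      ((((hφ1.continuous_deriv le_rfl).neg.intervalIntegrable _ _).const_mul ε))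
    rw [Real.norm_eq_abs] at this
    apply le_trans this
    have : (∫ x in x₀..(x₀+r), ε * -deriv φ x) = ε := by
      rw [intervalIntegral.integral_const_mul, intervalIntegral.integral_neg, hφd,
        tbD_integral_right hr]
      ring
    rw [this, abs_of_nonneg hε.le]
  -- zeroth order term
  have hT3int : Integrable (fun x => P (u x) * (u x - w x) * φ x) := by
    have heq : (fun x => P (u x) * (u x - w x) * φ x)
        = fun x => (P (u x) * u x) * φ x + (P (u x) * φ x) * (-w x) := by
      funext x; ring
    rw [heq]
    apply Integrable.add
    · apply Integrable.bdd_mul (c := CP) ((hφ1.continuous).integrable_of_hasCompactSupport hφc)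
        ((hP.comp_aestronglyMeasurable hu).mul hu)
      refine Filter.Eventually.of_forall (fun x => ?_)
      show ‖P (u x) * u x‖ ≤ CP
      simp only [Real.norm_eq_abs, abs_mul]
      have h1 : |P (u x)| ≤ CP := hCPb _ (hu01 x)
      have h2 : |u x| ≤ 1 := by
        have := hu01 x
        exact abs_le.2 ⟨by linarith [this.1], this.2⟩
      calc |P (u x)| * |u x| ≤ CP * 1 := mul_le_mul h1 h2 (abs_nonneg _) hCP0
      _ = CP := mul_one _
    · apply Integrable.bdd_mul (c := CP) hw.neg
        ((hP.comp_aestronglyMeasurable hu).mul (hφ1.continuous).aestronglyMeasurable)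
      refine Filter.Eventually.of_forall (fun x => ?_)
      show ‖P (u x) * φ x‖ ≤ CP
      simp only [Real.norm_eq_abs, abs_mul]
      have h1 : |P (u x)| ≤ CP := hCPb _ (hu01 x)
      have h3 : |φ x| ≤ 1 := by
        rw [abs_of_nonneg (hφnn x)]; exact tb_le_one x₀ r x
      calc |P (u x)| * |φ x| ≤ CP * 1 := mul_le_mul h1 h3 (abs_nonneg _) hCP0
      _ = CP := mul_one _
  have hT3 : |∫ x, P (u x) * (u x - w x) * φ x| ≤ ε := by
    have hb : ∀ x, |P (u x) * (u x - w x) * φ x|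
        ≤ Set.indicator (Icc (x₀ - δ₃) (x₀ + δ₃)) g0 x := by
      intro x
      by_cases hmem : x ∈ Icc (x₀ - δ₃) (x₀ + δ₃)
      · rw [Set.indicator_of_mem hmem]
        rw [abs_mul, abs_mul]
        have h1 : |P (u x)| ≤ CP := hCPb _ (hu01 x)
        have h2 : |u x - w x| ≤ 1 + |w x| := by
          calc |u x - w x| ≤ |u x| + |w x| := abs_sub _ _
          _ ≤ 1 + |w x| := by
              have := hu01 x
              have h3 : |u x| ≤ 1 := abs_le.2 ⟨by linarith [this.1], this.2⟩
              linarith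
        have h3 : |φ x| ≤ 1 := by
          rw [abs_of_nonneg (hφnn x)]; exact tb_le_one x₀ r x
        calc |P (u x)| * |u x - w x| * |φ x| ≤ CP * (1 + |w x|) * 1 := by
              apply mul_le_mul _ h3 (abs_nonneg _) (by positivity)
              exact mul_le_mul h1 h2 (abs_nonneg _) hCP0
        _ = g0 x := by rw [hg0]; ring
      · rw [Set.indicator_of_notMem hmem]
        have hout : φ x = 0 := by
          rw [hφdef]
          apply tb_zero hr
          simp only [mem_Icc, not_and_or, not_le] at hmem
          rcases hmem with h | h
          · rw [abs_sub_comm, abs_of_nonneg (by linarith)]; linarith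
          · rw [abs_of_nonneg (by linarith)]; linarith
        rw [hout, mul_zero, abs_zero]
    calc |∫ x, P (u x) * (u x - w x) * φ x| ≤ ∫ x, |P (u x) * (u x - w x) * φ x| := by
          rw [← Real.norm_eq_abs (∫ x, _)]
          exact norm_integral_le_integral_norm _
    _ ≤ ∫ x, Set.indicator (Icc (x₀ - δ₃) (x₀ + δ₃)) g0 x := by
          apply integral_mono hT3int.abs ?_ hb
          rw [integrable_indicator_iff measurableSet_Icc]
          exact hg0on _ measurableSet_Icc (by rw [Real.volume_Icc]; exact ENNReal.ofReal_lt_top)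
    _ = ∫ x in Icc (x₀ - δ₃) (x₀ + δ₃), g0 x := integral_indicator measurableSet_Icc
    _ ≤ ε := hδ₃'
  -- assemble
  rw [hQint_eq, hQsplit, hT1] at hH
  have h1 := abs_le.1 hleft
  have h2 := abs_le.1 hright
  have h3 := abs_le.1 hT3
  rw [hX]
  have hIneq : (∫ x in (x₀ - r)..x₀, Q x * deriv φ x) + (∫ x in x₀..(x₀ + r), Q x * deriv φ x)
      ≤ (Qm - Qp) + 2*ε := by
    cases h1 with | intro h1a h1b =>
    cases h2 with | intro h2a h2b =>
    linarith
  have hlam' : lam * ((∫ x in (x₀ - r)..x₀, Q x * deriv φ x)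
      + (∫ x in x₀..(x₀ + r), Q x * deriv φ x)) ≤ lam * ((Qm - Qp) + 2*ε) :=
    mul_le_mul_of_nonneg_left hIneq hlam.le
  cases h3 with | intro h3a h3b =>
  linarith

/-- Theorem 4.4 (second part): conservation and entropy conditions at a point of
discontinuity of a vanishing viscosity limit `u` of the resolvents `J_λ^{ε_ν} w`. -/
theorem vanishing_viscosity_jump_conditions
    (f : ℝ → ℝ → ℝ) (fl fr : ℝ → ℝ) (hf : HypF1 f fl fr)
    (lam : ℝ) (hlam : 0 < lam)
    (w : ℝ → ℝ) (hw : Integrable w) (hw01 : ∀ᵐ x, w x ∈ Set.Icc (0:ℝ) 1)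
    (hwBV : eVariationOn w Set.univ ≠ ⊤)
    -- `u` is the pointwise limit of a (sub)sequence of viscous resolvents with
    -- vanishing viscosities
    (ε : ℕ → ℝ) (hεpos : ∀ j, 0 < ε j) (hεlim : Tendsto ε atTop (𝓝 0))
    (U : ℕ → ℝ → ℝ)
    (hU : ∀ j, Integrable (U j) ∧ IsWeakSolRes f lam (ε j) w (U j))
    (u : ℝ → ℝ) (hulim : ∀ x, Tendsto (fun j => U j x) atTop (𝓝 (u x)))
    (huBV : eVariationOn u Set.univ ≠ ⊤) (hu01 : ∀ x, u x ∈ Set.Icc (0:ℝ) 1)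
    -- so that `u` solves `u + λ f(x,u)_x = w` and satisfies the entropy inequality
    (hsol : IsWeakSolResNV f lam w u)
    (hent : ∀ η : ℝ → ℝ, ContDiff ℝ (⊤ : ℕ∞) η → ConvexOn ℝ Set.univ η →
      EntropyIneq fl fr lam w u η)
    -- `u` is discontinuous at `x₀` with one-sided limits `um = u(x₀−)`, `up = u(x₀+)`
    (x₀ um up : ℝ)
    (hum : Tendsto u (𝓝[<] x₀) (𝓝 um)) (hup : Tendsto u (𝓝[>] x₀) (𝓝 up))
    (hjump : um ≠ up) :
    -- conservation of the flux through the jump: `f(x₀−,u⁻) = f(x₀+,u⁺) = f̄`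
    ((if x₀ ≤ 0 then fl um else fr um) = (if x₀ < 0 then fl up else fr up)) ∧
    -- 1. upward jump away from the interface
    ((um < up ∧ x₀ ≠ 0) →
      ∀ k ∈ Set.Icc um up, (if x₀ ≤ 0 then fl um else fr um) ≤ f x₀ k) ∧
    -- 2. downward jump away from the interface
    ((up < um ∧ x₀ ≠ 0) →
      ∀ k ∈ Set.Icc up um, f x₀ k ≤ (if x₀ ≤ 0 then fl um else fr um)) ∧
    -- 3. upward jump at the interface
    ((um < up ∧ x₀ = 0) →
      ∃ us ∈ Set.Icc um up,
        (∀ k ∈ Set.Icc um us, (if x₀ ≤ 0 then fl um else fr um) ≤ fl k) ∧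
        (∀ k ∈ Set.Icc us up, (if x₀ ≤ 0 then fl um else fr um) ≤ fr k)) ∧
    -- 4. downward jump at the interface
    ((up < um ∧ x₀ = 0) →
      ∃ us ∈ Set.Icc up um,
        (∀ k ∈ Set.Icc up us, fr k ≤ (if x₀ ≤ 0 then fl um else fr um)) ∧
        (∀ k ∈ Set.Icc us um, fl k ≤ (if x₀ ≤ 0 then fl um else fr um))) := by
  have hlamne : lam ≠ 0 := ne_of_gt hlam
  have huAESM : AEStronglyMeasurable u volume :=
    aestronglyMeasurable_of_tendsto_ae atTop (fun j => (hU j).1.aestronglyMeasurable)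
      (Filter.Eventually.of_forall hulim)
  have hflc : Continuous fl := hf.smooth_l.continuous
  have hfrc : Continuous fr := hf.smooth_r.continuous
  have hfl' : Continuous (deriv fl) := hf.smooth_l.continuous_deriv (by exact_mod_cast le_top)
  have hfr' : Continuous (deriv fr) := hf.smooth_r.continuous_deriv (by exact_mod_cast le_top)
  obtain ⟨Cl, hCl0, hClb⟩ := cont_bound_unit hflc
  obtain ⟨Cr, hCr0, hCrb⟩ := cont_bound_unit hfrc
  have hubd : ∀ x, |u x| ≤ 1 := fun x => abs_le.2 ⟨by linarith [(hu01 x).1], (hu01 x).2⟩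
  have hFeq : (fun x => f x (u x)) = fun x => if x ≤ 0 then fl (u x) else fr (u x) :=
    funext fun x => hf.piecewise x (u x)
  -- ============ Part 0: conservation of the flux ============
  have hmaster0 : ∀ sgn : ℝ,
      lam * (if x₀ = 0 then (0:ℝ) else 0)
        - lam * ((if x₀ ≤ 0 then sgn * fl um / lam else sgn * fr um / lam)
          - (if x₀ < 0 then sgn * fl up / lam else sgn * fr up / lam)) ≤ 0 := by
    intro sgn
    apply master hlam huAESM hu01 hw
      (Gl := fun v => sgn * fl v / lam) (Gr := fun v => sgn * fr v / lam)
      (P := fun _ => sgn / lam)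
      (((continuous_const.mul hflc).div_const lam))
      (((continuous_const.mul hfrc).div_const lam))
      continuous_const hum hup
    intro φ hφ1 hφc hφ0
    -- integrability
    obtain ⟨Cφ, hCφ⟩ : ∃ C, ∀ x, |φ x| ≤ C := by
      obtain ⟨C, hC⟩ := hφ1.continuous.bounded_above_of_compact_support hφc
      exact ⟨C, fun x => by simpa using hC x⟩
    have hφint : Integrable φ := hφ1.continuous.integrable_of_hasCompactSupport hφc
    have hint1 : Integrable (fun x => (u x - w x) / lam * φ x) := by
      have heq : (fun x => (u x - w x) / lam * φ x)
          = fun x => (u x * (1/lam)) * φ x + (φ x * (1/lam)) * (-w x) := funext fun x => by ring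
      rw [heq]
      apply Integrable.add
      · apply Integrable.bdd_mul (c := |1/lam|) hφint (huAESM.mul aestronglyMeasurable_const)
        refine Filter.Eventually.of_forall (fun x => ?_)
        show ‖u x * (1/lam)‖ ≤ |1/lam|
        simp only [Real.norm_eq_abs, abs_mul]
        calc |u x| * |1/lam| ≤ 1 * |1/lam| :=
          mul_le_mul_of_nonneg_right (hubd x) (abs_nonneg _)
        _ = |1/lam| := one_mul _
      · apply Integrable.bdd_mul (c := Cφ * |1/lam|) hw.neg
          ((hφ1.continuous.aestronglyMeasurable).mul aestronglyMeasurable_const)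
        refine Filter.Eventually.of_forall (fun x => ?_)
        show ‖φ x * (1/lam)‖ ≤ Cφ * |1/lam|
        simp only [Real.norm_eq_abs, abs_mul]
        exact mul_le_mul_of_nonneg_right (hCφ x) (abs_nonneg _)
    have hint2 : Integrable (fun x => f x (u x) * deriv φ x) := by
      rw [show (fun x => f x (u x) * deriv φ x)
          = fun x => (if x ≤ 0 then fl (u x) else fr (u x)) * deriv φ x from
          funext fun x => by rw [hf.piecewise x (u x)]]
      apply Integrable.bdd_mul (c := max Cl Cr)
        ((hφ1.continuous_deriv le_rfl).integrable_of_hasCompactSupport hφc.deriv)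
        (aesm_pcw hflc hfrc huAESM)
      refine Filter.Eventually.of_forall (fun x => ?_)
      show ‖if x ≤ 0 then fl (u x) else fr (u x)‖ ≤ max Cl Cr
      simp only [Real.norm_eq_abs]
      split_ifs with h
      · exact le_trans (hClb _ (hu01 x)) (le_max_left _ _)
      · exact le_trans (hCrb _ (hu01 x)) (le_max_right _ _)
    have hkey := hsol φ hφ1 hφc
    rw [integral_sub hint1 hint2, sub_eq_zero] at hkey
    -- rewrite the three terms
    have e2 : (∫ x, (if x ≤ 0 then sgn * fl (u x) / lam else sgn * fr (u x) / lam) * deriv φ x)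
        = (sgn/lam) * ∫ x, f x (u x) * deriv φ x := by
      rw [← integral_const_mul]
      congr 1
      funext x
      rw [hf.piecewise x (u x)]
      split_ifs <;> ring
    have e3 : (∫ x, (sgn / lam) * (u x - w x) * φ x)
        = sgn * ∫ x, (u x - w x) / lam * φ x := by
      rw [← integral_const_mul]
      congr 1
      funext x
      ring
    show lam * φ 0 * 0
        - lam * (∫ x, (if x ≤ 0 then sgn * fl (u x) / lam else sgn * fr (u x) / lam) * deriv φ x)
        + (∫ x, (sgn / lam) * (u x - w x) * φ x) ≤ 0
    rw [e2, e3, hkey]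
    have : lam * ((sgn/lam) * ∫ x, f x (u x) * deriv φ x)
        = sgn * ∫ x, f x (u x) * deriv φ x := by
      field_simp
    rw [this]
    ring_nf
    exact le_refl 0
  have part0 : (if x₀ ≤ 0 then fl um else fr um) = (if x₀ < 0 then fl up else fr up) := by
    have h1 := hmaster0 1
    have h2 := hmaster0 (-1)
    have e1 : ∀ sgn : ℝ, (if x₀ ≤ 0 then sgn * fl um / lam else sgn * fr um / lam)
        = sgn * (if x₀ ≤ 0 then fl um else fr um) / lam := by
      intro sgn; split_ifs <;> rfl
    have e2 : ∀ sgn : ℝ, (if x₀ < 0 then sgn * fl up / lam else sgn * fr up / lam)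
        = sgn * (if x₀ < 0 then fl up else fr up) / lam := by
      intro sgn; split_ifs <;> rfl
    rw [e1, e2] at h1 h2
    set a := if x₀ ≤ 0 then fl um else fr um
    set b := if x₀ < 0 then fl up else fr up
    have h1' : lam * (1 * a / lam - 1 * b / lam) = a - b := by field_simp
    have h2' : lam * ((-1) * a / lam - (-1) * b / lam) = b - a := by field_simp; ring
    simp only [ite_self, mul_zero, zero_sub, neg_le, neg_zero] at h1 h2
    rw [h1'] at h1
    rw [h2'] at h2
    linarith
  -- ============ entropy key inequality ============
  have hentkey : ∀ ρ : ℝ → ℝ, ContDiff ℝ (⊤:ℕ∞) ρ → (∀ t, 0 ≤ ρ t) →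
      lam * (if x₀ = 0 then (∫ ω in (0:ℝ)..(u 0), ρ ω * (fr ω - fl ω)) else 0)
        - lam * ((if x₀ ≤ 0 then (∫ s in (0:ℝ)..um, (∫ t in (0:ℝ)..s, ρ t) * deriv fl s)
                   else (∫ s in (0:ℝ)..um, (∫ t in (0:ℝ)..s, ρ t) * deriv fr s))
          - (if x₀ < 0 then (∫ s in (0:ℝ)..up, (∫ t in (0:ℝ)..s, ρ t) * deriv fl s)
                   else (∫ s in (0:ℝ)..up, (∫ t in (0:ℝ)..s, ρ t) * deriv fr s))) ≤ 0 := by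
    intro ρ hρ hρ0
    set P : ℝ → ℝ := fun t => ∫ s in (0:ℝ)..t, ρ s with hPdef
    have hPc : Continuous P := primitive_continuous hρ.continuous
    have hPs : ContDiff ℝ (⊤:ℕ∞) P := primitive_contDiff hρ
    set η : ℝ → ℝ := fun t => ∫ s in (0:ℝ)..t, P s with hηdef
    have hη1 : deriv η = P := primitive_deriv hPc
    have hη2 : deriv P = ρ := primitive_deriv hρ.continuous
    have hηs : ContDiff ℝ (⊤:ℕ∞) η := primitive_contDiff hPs
    have hηconv : ConvexOn ℝ Set.univ η := by
      apply convexOn_of_deriv2_nonneg convex_univ hηs.continuous.continuousOn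
      · exact (hηs.differentiable (by simp)).differentiableOn
      · rw [hη1]
        exact (hPs.differentiable (by simp)).differentiableOn
      · intro x _
        have h2 : deriv^[2] η = ρ := by
          rw [Function.iterate_succ_apply', Function.iterate_one, hη1, hη2]
        rw [h2]
        exact hρ0 x
    have hEI := hent η hηs hηconv
    have H : ∀ φ : ℝ → ℝ, ContDiff ℝ 1 φ → HasCompactSupport φ → (∀ x, 0 ≤ φ x) →
        lam * φ 0 * (∫ ω in (0:ℝ)..(u 0), ρ ω * (fr ω - fl ω))
          - lam * (∫ x, (if x ≤ 0 then (fun v => ∫ s in (0:ℝ)..v, P s * deriv fl s) (u x)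
              else (fun v => ∫ s in (0:ℝ)..v, P s * deriv fr s) (u x)) * deriv φ x)
          + (∫ x, P (u x) * (u x - w x) * φ x) ≤ 0 := by
      intro φ h1 h2 h3
      have hh := hEI φ h1 h2 h3
      simp only [hη1, hη2] at hh
      exact hh
    exact master hlam huAESM hu01 hw
      (Gl := fun v => ∫ s in (0:ℝ)..v, P s * deriv fl s)
      (Gr := fun v => ∫ s in (0:ℝ)..v, P s * deriv fr s)
      (P := P)
      (primitive_continuous (hPc.mul hfl'))
      (primitive_continuous (hPc.mul hfr'))
      hPc hum hup H
  -- turn lam * A - lam * B ≤ 0 into A ≤ B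
  have hdiv : ∀ A B : ℝ, lam * A - lam * B ≤ 0 → A ≤ B := by
    intro A B h
    by_contra hc
    push_neg at hc
    nlinarith
  -- ============ common material for the interface cases ============
  have hflfr0 : x₀ = 0 → fl um = fr up := by
    intro hx0
    subst hx0
    have h := part0
    rw [if_pos (le_refl (0:ℝ)), if_neg (lt_irrefl (0:ℝ))] at h
    exact h
  have hkeyC : x₀ = 0 → ∀ ρ : ℝ → ℝ, ContDiff ℝ (⊤:ℕ∞) ρ → (∀ t, 0 ≤ ρ t) →
      0 ≤ (∫ s in um..(u 0), ρ s * (fl s - fl um))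
        + ∫ s in (u 0)..up, ρ s * (fr s - fl um) := by
    intro hx0
    have hflfr := hflfr0 hx0
    subst hx0
    intro ρ hρ hρ0
    have hρc := hρ.continuous
    have hk' := hentkey ρ hρ hρ0
    rw [if_pos rfl, if_pos (le_refl (0:ℝ)), if_neg (lt_irrefl (0:ℝ))] at hk'
    have hd := hdiv _ _ hk'
    have hibpl := ibp_primitive hρc hf.smooth_l 0 um
    have hibpr := ibp_primitive hρc hf.smooth_r 0 up
    rw [intervalIntegral.integral_same, hf.zero_l] at hibpl
    rw [intervalIntegral.integral_same, hf.zero_r, ← hflfr] at hibpr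
    have hAexp : (∫ ω in (0:ℝ)..(u 0), ρ ω * (fr ω - fl ω))
        = (∫ ω in (0:ℝ)..(u 0), ρ ω * fr ω) - ∫ ω in (0:ℝ)..(u 0), ρ ω * fl ω := by
      rw [show (fun ω => ρ ω * (fr ω - fl ω)) = fun ω => ρ ω * fr ω - ρ ω * fl ω from
        funext fun ω => by ring]
      rw [intervalIntegral.integral_sub (f := fun ω => ρ ω * fr ω) (g := fun ω => ρ ω * fl ω) ((hρc.mul hfrc).intervalIntegrable _ _)
        ((hρc.mul hflc).intervalIntegrable _ _)]
    have hsl : (∫ s in (0:ℝ)..(u 0), ρ s * fl s) + (∫ s in (u 0)..um, ρ s * fl s)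
        = ∫ s in (0:ℝ)..um, ρ s * fl s :=
      intervalIntegral.integral_add_adjacent_intervals
        ((hρc.mul hflc).intervalIntegrable _ _) ((hρc.mul hflc).intervalIntegrable _ _)
    have hsr : (∫ s in (0:ℝ)..(u 0), ρ s * fr s) + (∫ s in (u 0)..up, ρ s * fr s)
        = ∫ s in (0:ℝ)..up, ρ s * fr s :=
      intervalIntegral.integral_add_adjacent_intervals
        ((hρc.mul hfrc).intervalIntegrable _ _) ((hρc.mul hfrc).intervalIntegrable _ _)
    have hsp1 : (∫ t in (0:ℝ)..(u 0), ρ t) + (∫ t in (u 0)..um, ρ t)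
        = ∫ t in (0:ℝ)..um, ρ t :=
      intervalIntegral.integral_add_adjacent_intervals
        (hρc.intervalIntegrable _ _) (hρc.intervalIntegrable _ _)
    have hsp2 : (∫ t in (0:ℝ)..(u 0), ρ t) + (∫ t in (u 0)..up, ρ t)
        = ∫ t in (0:ℝ)..up, ρ t :=
      intervalIntegral.integral_add_adjacent_intervals
        (hρc.intervalIntegrable _ _) (hρc.intervalIntegrable _ _)
    have hsp1m : ((∫ t in (0:ℝ)..(u 0), ρ t) + ∫ t in (u 0)..um, ρ t) * fl um
        = (∫ t in (0:ℝ)..um, ρ t) * fl um := by rw [hsp1]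
    have hsp2m : ((∫ t in (0:ℝ)..(u 0), ρ t) + ∫ t in (u 0)..up, ρ t) * fl um
        = (∫ t in (0:ℝ)..up, ρ t) * fl um := by rw [hsp2]
    have hexp1 : ∫ s in (u 0)..um, ρ s * (fl s - fl um)
        = (∫ s in (u 0)..um, ρ s * fl s) - fl um * ∫ s in (u 0)..um, ρ s := by
      rw [show (fun s => ρ s * (fl s - fl um)) = fun s => ρ s * fl s - fl um * ρ s from
        funext fun s => by ring]
      rw [intervalIntegral.integral_sub (f := fun s => ρ s * fl s) (g := fun s => fl um * ρ s) ((hρc.mul hflc).intervalIntegrable _ _)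
        ((continuous_const.mul hρc).intervalIntegrable _ _), intervalIntegral.integral_const_mul]
    have hsym1 : ∫ s in um..(u 0), ρ s * (fl s - fl um)
        = -∫ s in (u 0)..um, ρ s * (fl s - fl um) := intervalIntegral.integral_symm _ _
    have hexp2 : ∫ s in (u 0)..up, ρ s * (fr s - fl um)
        = (∫ s in (u 0)..up, ρ s * fr s) - fl um * ∫ s in (u 0)..up, ρ s := by
      rw [show (fun s => ρ s * (fr s - fl um)) = fun s => ρ s * fr s - fl um * ρ s from
        funext fun s => by ring]
      rw [intervalIntegral.integral_sub (f := fun s => ρ s * fr s) (g := fun s => fl um * ρ s) ((hρc.mul hfrc).intervalIntegrable _ _)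
        ((continuous_const.mul hρc).intervalIntegrable _ _), intervalIntegral.integral_const_mul]
    rw [hAexp] at hd
    rw [hsym1, hexp1, hexp2]
    linarith [hd, hibpl, hibpr, hsl, hsr, hsp1m, hsp2m]
  refine ⟨part0, ?_, ?_, ?_, ?_⟩
  -- ============ Part 1 ============
  · rintro ⟨hlt, hne⟩ k hk
    set g₀ : ℝ → ℝ := if x₀ ≤ 0 then fl else fr with hg₀
    have hg₀c : Continuous g₀ := by rw [hg₀]; split_ifs; exacts [hflc, hfrc]
    have hg₀s : ContDiff ℝ (⊤:ℕ∞) g₀ := by rw [hg₀]; split_ifs; exacts [hf.smooth_l, hf.smooth_r]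
    have hfxk : f x₀ k = g₀ k := by rw [hf.piecewise, hg₀]; split_ifs <;> rfl
    have hfbar_eq : (if x₀ ≤ 0 then fl um else fr um) = g₀ um := by
      rw [hg₀]; split_ifs <;> rfl
    have hifp : ∀ L R : ℝ, (if x₀ < 0 then L else R) = (if x₀ ≤ 0 then L else R) := by
      intro L R
      rcases lt_trichotomy x₀ 0 with h|h|h
      · rw [if_pos h, if_pos h.le]
      · exact absurd h hne
      · rw [if_neg (not_lt.2 h.le), if_neg (not_le.2 h)]
    have hgup : g₀ up = g₀ um := by
      have h6 : (if x₀ ≤ 0 then fl up else fr up) = g₀ up := by rw [hg₀]; split_ifs <;> rfl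
      rw [← h6, ← hifp, ← part0, hfbar_eq]
    have hkey : ∀ ρ : ℝ → ℝ, ContDiff ℝ (⊤:ℕ∞) ρ → (∀ t, 0 ≤ ρ t) →
        0 ≤ ∫ s in um..up, ρ s * (g₀ s - g₀ um) := by
      intro ρ hρ hρ0
      have hρc := hρ.continuous
      have hk' := hentkey ρ hρ hρ0
      rw [if_neg hne, hifp] at hk'
      have hQm : (if x₀ ≤ 0 then (∫ s in (0:ℝ)..um, (∫ t in (0:ℝ)..s, ρ t) * deriv fl s)
          else (∫ s in (0:ℝ)..um, (∫ t in (0:ℝ)..s, ρ t) * deriv fr s))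
          = ∫ s in (0:ℝ)..um, (∫ t in (0:ℝ)..s, ρ t) * deriv g₀ s := by
        rw [hg₀]; split_ifs <;> rfl
      have hQp : (if x₀ ≤ 0 then (∫ s in (0:ℝ)..up, (∫ t in (0:ℝ)..s, ρ t) * deriv fl s)
          else (∫ s in (0:ℝ)..up, (∫ t in (0:ℝ)..s, ρ t) * deriv fr s))
          = ∫ s in (0:ℝ)..up, (∫ t in (0:ℝ)..s, ρ t) * deriv g₀ s := by
        rw [hg₀]; split_ifs <;> rfl
      rw [hQm, hQp] at hk'
      have h5 := hdiv _ _ hk'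
      -- h5 : 0 ≤ G um - G up
      have hg₀' : Continuous (deriv g₀) := by
        rw [hg₀]; split_ifs; exacts [hfl', hfr']
      have hPg : Continuous (fun s => (∫ t in (0:ℝ)..s, ρ t) * deriv g₀ s) :=
        (primitive_continuous hρc).mul hg₀'
      have hadj : (∫ s in (0:ℝ)..um, (∫ t in (0:ℝ)..s, ρ t) * deriv g₀ s)
          + (∫ s in um..up, (∫ t in (0:ℝ)..s, ρ t) * deriv g₀ s)
          = ∫ s in (0:ℝ)..up, (∫ t in (0:ℝ)..s, ρ t) * deriv g₀ s :=
        intervalIntegral.integral_add_adjacent_intervals (hPg.intervalIntegrable _ _)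
          (hPg.intervalIntegrable _ _)
      have hibp := ibp_primitive hρc hg₀s um up
      have hPdiff : (∫ t in (0:ℝ)..um, ρ t) + (∫ t in um..up, ρ t)
          = ∫ t in (0:ℝ)..up, ρ t :=
        intervalIntegral.integral_add_adjacent_intervals (hρc.intervalIntegrable _ _)
          (hρc.intervalIntegrable _ _)
      have hexp : ∫ s in um..up, ρ s * (g₀ s - g₀ um)
          = (∫ s in um..up, ρ s * g₀ s) - g₀ um * ∫ s in um..up, ρ s := by
        rw [show (fun s => ρ s * (g₀ s - g₀ um)) = fun s => ρ s * g₀ s - g₀ um * ρ s from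
          funext fun s => by ring]
        rw [intervalIntegral.integral_sub (f := fun s => ρ s * g₀ s) (g := fun s => g₀ um * ρ s) ((hρc.mul hg₀c).intervalIntegrable _ _)
          ((continuous_const.mul hρc).intervalIntegrable _ _), intervalIntegral.integral_const_mul]
      rw [hgup] at hibp
      rw [hexp]
      have hPd2 : ((∫ t in (0:ℝ)..um, ρ t) + ∫ t in um..up, ρ t) * g₀ um
          = (∫ t in (0:ℝ)..up, ρ t) * g₀ um := by rw [hPdiff]
      linarith [h5, hadj, hibp, hPd2]
    have hcl : ∀ k' ∈ Icc um up, 0 ≤ g₀ k' - g₀ um := by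
      apply nonneg_on_Icc (g := fun s => g₀ s - g₀ um) (hg₀c.sub continuous_const) hlt
      intro k' hk'
      apply extraction (g := fun s => g₀ s - g₀ um) (hg₀c.sub continuous_const)
        (le_refl um) (le_refl up) hk'.1 hk'.2
      intro ρ h1 h2 _
      exact hkey ρ h1 h2
    have := hcl k hk
    rw [hfxk, hfbar_eq]
    linarith
  -- ============ Part 2 ============
  · rintro ⟨hlt, hne⟩ k hk
    set g₀ : ℝ → ℝ := if x₀ ≤ 0 then fl else fr with hg₀
    have hg₀c : Continuous g₀ := by rw [hg₀]; split_ifs; exacts [hflc, hfrc]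
    have hg₀s : ContDiff ℝ (⊤:ℕ∞) g₀ := by rw [hg₀]; split_ifs; exacts [hf.smooth_l, hf.smooth_r]
    have hfxk : f x₀ k = g₀ k := by rw [hf.piecewise, hg₀]; split_ifs <;> rfl
    have hfbar_eq : (if x₀ ≤ 0 then fl um else fr um) = g₀ um := by
      rw [hg₀]; split_ifs <;> rfl
    have hifp : ∀ L R : ℝ, (if x₀ < 0 then L else R) = (if x₀ ≤ 0 then L else R) := by
      intro L R
      rcases lt_trichotomy x₀ 0 with h|h|h
      · rw [if_pos h, if_pos h.le]
      · exact absurd h hne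
      · rw [if_neg (not_lt.2 h.le), if_neg (not_le.2 h)]
    have hgup : g₀ up = g₀ um := by
      have h6 : (if x₀ ≤ 0 then fl up else fr up) = g₀ up := by rw [hg₀]; split_ifs <;> rfl
      rw [← h6, ← hifp, ← part0, hfbar_eq]
    have hkey : ∀ ρ : ℝ → ℝ, ContDiff ℝ (⊤:ℕ∞) ρ → (∀ t, 0 ≤ ρ t) →
        0 ≤ ∫ s in up..um, ρ s * (g₀ um - g₀ s) := by
      intro ρ hρ hρ0
      have hρc := hρ.continuous
      have hk' := hentkey ρ hρ hρ0
      rw [if_neg hne, hifp] at hk'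
      have hQm : (if x₀ ≤ 0 then (∫ s in (0:ℝ)..um, (∫ t in (0:ℝ)..s, ρ t) * deriv fl s)
          else (∫ s in (0:ℝ)..um, (∫ t in (0:ℝ)..s, ρ t) * deriv fr s))
          = ∫ s in (0:ℝ)..um, (∫ t in (0:ℝ)..s, ρ t) * deriv g₀ s := by
        rw [hg₀]; split_ifs <;> rfl
      have hQp : (if x₀ ≤ 0 then (∫ s in (0:ℝ)..up, (∫ t in (0:ℝ)..s, ρ t) * deriv fl s)
          else (∫ s in (0:ℝ)..up, (∫ t in (0:ℝ)..s, ρ t) * deriv fr s))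
          = ∫ s in (0:ℝ)..up, (∫ t in (0:ℝ)..s, ρ t) * deriv g₀ s := by
        rw [hg₀]; split_ifs <;> rfl
      rw [hQm, hQp] at hk'
      have h5 := hdiv _ _ hk'
      have hg₀' : Continuous (deriv g₀) := by
        rw [hg₀]; split_ifs; exacts [hfl', hfr']
      have hPg : Continuous (fun s => (∫ t in (0:ℝ)..s, ρ t) * deriv g₀ s) :=
        (primitive_continuous hρc).mul hg₀'
      have hadj : (∫ s in (0:ℝ)..um, (∫ t in (0:ℝ)..s, ρ t) * deriv g₀ s)
          + (∫ s in um..up, (∫ t in (0:ℝ)..s, ρ t) * deriv g₀ s)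
          = ∫ s in (0:ℝ)..up, (∫ t in (0:ℝ)..s, ρ t) * deriv g₀ s :=
        intervalIntegral.integral_add_adjacent_intervals (hPg.intervalIntegrable _ _)
          (hPg.intervalIntegrable _ _)
      have hibp := ibp_primitive hρc hg₀s um up
      have hPdiff : (∫ t in (0:ℝ)..um, ρ t) + (∫ t in um..up, ρ t)
          = ∫ t in (0:ℝ)..up, ρ t :=
        intervalIntegral.integral_add_adjacent_intervals (hρc.intervalIntegrable _ _)
          (hρc.intervalIntegrable _ _)
      have hexp : ∫ s in um..up, ρ s * (g₀ s - g₀ um)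
          = (∫ s in um..up, ρ s * g₀ s) - g₀ um * ∫ s in um..up, ρ s := by
        rw [show (fun s => ρ s * (g₀ s - g₀ um)) = fun s => ρ s * g₀ s - g₀ um * ρ s from
          funext fun s => by ring]
        rw [intervalIntegral.integral_sub (f := fun s => ρ s * g₀ s) (g := fun s => g₀ um * ρ s) ((hρc.mul hg₀c).intervalIntegrable _ _)
          ((continuous_const.mul hρc).intervalIntegrable _ _), intervalIntegral.integral_const_mul]
      have hsym : ∫ s in up..um, ρ s * (g₀ um - g₀ s)
          = ∫ s in um..up, ρ s * (g₀ s - g₀ um) := by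
        rw [show (fun s => ρ s * (g₀ um - g₀ s)) = fun s => -(ρ s * (g₀ s - g₀ um)) from
          funext fun s => by ring]
        rw [intervalIntegral.integral_neg, ← intervalIntegral.integral_symm]
      rw [hgup] at hibp
      rw [hsym, hexp]
      have hPd2 : ((∫ t in (0:ℝ)..um, ρ t) + ∫ t in um..up, ρ t) * g₀ um
          = (∫ t in (0:ℝ)..up, ρ t) * g₀ um := by rw [hPdiff]
      linarith [h5, hadj, hibp, hPd2]
    have hcl : ∀ k' ∈ Icc up um, 0 ≤ g₀ um - g₀ k' := by
      apply nonneg_on_Icc (g := fun s => g₀ um - g₀ s) (continuous_const.sub hg₀c) hlt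
      intro k' hk'
      apply extraction (g := fun s => g₀ um - g₀ s) (continuous_const.sub hg₀c)
        (le_refl up) (le_refl um) hk'.1 hk'.2
      intro ρ h1 h2 _
      exact hkey ρ h1 h2
    have := hcl k hk
    rw [hfxk, hfbar_eq]
    linarith
  -- ============ Part 3 ============
  · rintro ⟨hlt, hx0⟩
    have hflfr := hflfr0 hx0
    have hkey3 := hkeyC hx0
    subst hx0
    rw [if_pos (le_refl (0:ℝ))]
    refine ⟨max um (min (u 0) up), ⟨le_max_left _ _, max_le hlt.le (min_le_right _ _)⟩, ?_, ?_⟩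
    · -- fl-claim on [um, us]
      intro k hk
      rcases eq_or_lt_of_le (le_max_left um (min (u 0) up)) with hus | hus
      · have hk' : k = um := by
          rw [← hus] at hk
          exact le_antisymm hk.2 hk.1
        rw [hk']
      · have hmin : um < min (u 0) up := by
          by_contra hcon
          push_neg at hcon
          rw [max_eq_left hcon] at hus
          exact lt_irrefl _ hus
        have husq : max um (min (u 0) up) = min (u 0) up := max_eq_right hmin.le
        have hcl : ∀ k' ∈ Icc um (max um (min (u 0) up)), 0 ≤ fl k' - fl um := by
          apply nonneg_on_Icc (g := fun s => fl s - fl um) (hflc.sub continuous_const) hus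
          intro k' hk'
          apply extraction (g := fun s => fl s - fl um) (a := um) (b := u 0)
            (a' := um) (b' := max um (min (u 0) up)) (hflc.sub continuous_const)
            (le_refl um) (by rw [husq]; exact min_le_left _ _) hk'.1 hk'.2
          intro ρ h1 h2 hsupp
          have hzero : ∫ s in (u 0)..up, ρ s * (fr s - fl um) = 0 := by
            rw [intervalIntegral.integral_congr (g := fun _ => (0:ℝ))]
            · simp
            · intro x hx
              have hxge : max um (min (u 0) up) ≤ x := by
                rw [husq]
                rcases Set.mem_uIcc.1 hx with ⟨ha, _⟩|⟨ha, _⟩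
                · exact le_trans (min_le_left _ _) ha
                · exact le_trans (min_le_right _ _) ha
              have hρx : ρ x = 0 := by
                by_contra hne0
                have hmem := hsupp (subset_tsupport _ (Function.mem_support.2 hne0))
                exact absurd hmem.2 (not_lt.2 hxge)
              show ρ x * (fr x - fl um) = 0
              rw [hρx, zero_mul]
          have hk3 := hkey3 ρ h1 h2
          rw [hzero] at hk3
          linarith [hk3]
        have := hcl k hk
        linarith
    · -- fr-claim on [us, up]
      intro k hk
      rcases eq_or_lt_of_le (max_le hlt.le (min_le_right (u 0) up) :
          max um (min (u 0) up) ≤ up) with hus | hus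
      · have hk' : k = up := by
          rw [hus] at hk
          exact le_antisymm hk.2 hk.1
        rw [hk', hflfr]
      · have hvle : u 0 ≤ up := by
          by_contra hcon
          push_neg at hcon
          rw [min_eq_right hcon.le, max_eq_right hlt.le] at hus
          exact lt_irrefl _ hus
        have husq : min (u 0) up = u 0 := min_eq_left hvle
        have hv₀us : u 0 ≤ max um (min (u 0) up) := by
          rw [husq]; exact le_max_right _ _
        have hcl : ∀ k' ∈ Icc (max um (min (u 0) up)) up, 0 ≤ fr k' - fl um := by
          apply nonneg_on_Icc (g := fun s => fr s - fl um) (hfrc.sub continuous_const) hus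
          intro k' hk'
          apply extraction (g := fun s => fr s - fl um) (a := u 0) (b := up)
            (a' := max um (min (u 0) up)) (b' := up) (hfrc.sub continuous_const)
            hv₀us (le_refl up) hk'.1 hk'.2
          intro ρ h1 h2 hsupp
          have hzero : ∫ s in um..(u 0), ρ s * (fl s - fl um) = 0 := by
            rw [intervalIntegral.integral_congr (g := fun _ => (0:ℝ))]
            · simp
            · intro x hx
              have hxle : x ≤ max um (min (u 0) up) := by
                rcases Set.mem_uIcc.1 hx with ⟨_, hb⟩|⟨_, hb⟩
                · rw [husq]; exact le_trans hb (le_max_right _ _)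
                · exact le_trans hb (le_max_left _ _)
              have hρx : ρ x = 0 := by
                by_contra hne0
                have hmem := hsupp (subset_tsupport _ (Function.mem_support.2 hne0))
                exact absurd hxle (not_le.2 hmem.1)
              show ρ x * (fl x - fl um) = 0
              rw [hρx, zero_mul]
          have hk3 := hkey3 ρ h1 h2
          rw [hzero] at hk3
          linarith [hk3]
        have := hcl k hk
        linarith
  -- ============ Part 4 ============
  · rintro ⟨hlt, hx0⟩
    have hflfr := hflfr0 hx0
    have hkeyC' := hkeyC hx0
    subst hx0
    rw [if_pos (le_refl (0:ℝ))]
    have hkey4 : ∀ ρ : ℝ → ℝ, ContDiff ℝ (⊤:ℕ∞) ρ → (∀ t, 0 ≤ ρ t) →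
        0 ≤ (∫ s in up..(u 0), ρ s * (fl um - fr s))
          + ∫ s in (u 0)..um, ρ s * (fl um - fl s) := by
      intro ρ h1 h2
      have h := hkeyC' ρ h1 h2
      have e1 : ∫ s in up..(u 0), ρ s * (fl um - fr s)
          = ∫ s in (u 0)..up, ρ s * (fr s - fl um) := by
        rw [show (fun s => ρ s * (fl um - fr s)) = fun s => -(ρ s * (fr s - fl um)) from
          funext fun s => by ring]
        rw [intervalIntegral.integral_neg, ← intervalIntegral.integral_symm]
      have e2 : ∫ s in (u 0)..um, ρ s * (fl um - fl s)
          = ∫ s in um..(u 0), ρ s * (fl s - fl um) := by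
        rw [show (fun s => ρ s * (fl um - fl s)) = fun s => -(ρ s * (fl s - fl um)) from
          funext fun s => by ring]
        rw [intervalIntegral.integral_neg, ← intervalIntegral.integral_symm]
      linarith
    refine ⟨max up (min (u 0) um), ⟨le_max_left _ _, max_le hlt.le (min_le_right _ _)⟩, ?_, ?_⟩
    · -- fr-claim on [up, us]
      intro k hk
      rcases eq_or_lt_of_le (le_max_left up (min (u 0) um)) with hus | hus
      · have hk' : k = up := by
          rw [← hus] at hk
          exact le_antisymm hk.2 hk.1
        rw [hk', hflfr]
      · have hmin : up < min (u 0) um := by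
          by_contra hcon
          push_neg at hcon
          rw [max_eq_left hcon] at hus
          exact lt_irrefl _ hus
        have husq : max up (min (u 0) um) = min (u 0) um := max_eq_right hmin.le
        have hcl : ∀ k' ∈ Icc up (max up (min (u 0) um)), 0 ≤ fl um - fr k' := by
          apply nonneg_on_Icc (g := fun s => fl um - fr s) (continuous_const.sub hfrc) hus
          intro k' hk'
          apply extraction (g := fun s => fl um - fr s) (a := up) (b := u 0)
            (a' := up) (b' := max up (min (u 0) um)) (continuous_const.sub hfrc)
            (le_refl up) (by rw [husq]; exact min_le_left _ _) hk'.1 hk'.2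
          intro ρ h1 h2 hsupp
          have hzero : ∫ s in (u 0)..um, ρ s * (fl um - fl s) = 0 := by
            rw [intervalIntegral.integral_congr (g := fun _ => (0:ℝ))]
            · simp
            · intro x hx
              have hxge : max up (min (u 0) um) ≤ x := by
                rw [husq]
                rcases Set.mem_uIcc.1 hx with ⟨ha, _⟩|⟨ha, _⟩
                · exact le_trans (min_le_left _ _) ha
                · exact le_trans (min_le_right _ _) ha
              have hρx : ρ x = 0 := by
                by_contra hne0
                have hmem := hsupp (subset_tsupport _ (Function.mem_support.2 hne0))
                exact absurd hmem.2 (not_lt.2 hxge)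
              show ρ x * (fl um - fl x) = 0
              rw [hρx, zero_mul]
          have hk4 := hkey4 ρ h1 h2
          rw [hzero] at hk4
          linarith [hk4]
        have := hcl k hk
        linarith
    · -- fl-claim on [us, um]
      intro k hk
      rcases eq_or_lt_of_le (max_le hlt.le (min_le_right (u 0) um) :
          max up (min (u 0) um) ≤ um) with hus | hus
      · have hk' : k = um := by
          rw [hus] at hk
          exact le_antisymm hk.2 hk.1
        rw [hk']
      · have hvle : u 0 ≤ um := by
          by_contra hcon
          push_neg at hcon
          rw [min_eq_right hcon.le, max_eq_right hlt.le] at hus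
          exact lt_irrefl _ hus
        have husq : min (u 0) um = u 0 := min_eq_left hvle
        have hv₀us : u 0 ≤ max up (min (u 0) um) := by
          rw [husq]; exact le_max_right _ _
        have hcl : ∀ k' ∈ Icc (max up (min (u 0) um)) um, 0 ≤ fl um - fl k' := by
          apply nonneg_on_Icc (g := fun s => fl um - fl s) (continuous_const.sub hflc) hus
          intro k' hk'
          apply extraction (g := fun s => fl um - fl s) (a := u 0) (b := um)
            (a' := max up (min (u 0) um)) (b' := um) (continuous_const.sub hflc)
            hv₀us (le_refl um) hk'.1 hk'.2
          intro ρ h1 h2 hsupp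
          have hzero : ∫ s in up..(u 0), ρ s * (fl um - fr s) = 0 := by
            rw [intervalIntegral.integral_congr (g := fun _ => (0:ℝ))]
            · simp
            · intro x hx
              have hxle : x ≤ max up (min (u 0) um) := by
                rcases Set.mem_uIcc.1 hx with ⟨_, hb⟩|⟨_, hb⟩
                · rw [husq]; exact le_trans hb (le_max_right _ _)
                · exact le_trans hb (le_max_left _ _)
              have hρx : ρ x = 0 := by
                by_contra hne0
                have hmem := hsupp (subset_tsupport _ (Function.mem_support.2 hne0))
                exact absurd hxle (not_le.2 hmem.1)
              show ρ x * (fl um - fr x) = 0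
              rw [hρx, zero_mul]
          have hk4 := hkey4 ρ h1 h2
          rw [hzero] at hk4
          linarith [hk4]
        have := hcl k hk
        linarith
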